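/- For every integer n ≥ 1, ∑_{j=1}^{n} H_{j,2}^2/j^2 = (1/3)H_{n,2}^3 + ∑_{j=1}^{n} H_{j,2}/j^4 − (1/3)H_{n,6}. Moreover, ∑_{j=1}^{n} H_{j,2}^2/j^2 → ζ(3)² + 19π⁶/22680 as n → ∞. -/
import Mathlib


open Finset Filter Real Topology

/-- Generalized harmonic number `H (n, m) = ∑_{i=1}^{n} 1/i^m` as a real number. -/
noncomputable def H (n m : ℕ) : ℝ := ∑ i ∈ Finset.Icc 1 n, (1 : ℝ) / (i : ℝ) ^ m

/-- Apéry's constant `ζ(3) = ∑_{k=1}^{∞} 1/k³`. -/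
noncomputable def zeta3 : ℝ := ∑' k : ℕ, 1 / ((k : ℝ) + 1) ^ 3

/- ### Basic facts about `H` -/

lemma H_def (n m : ℕ) : H n m = ∑ i ∈ Finset.Icc 1 n, (1 : ℝ) / (i : ℝ) ^ m := rfl

lemma H_zero (m : ℕ) : H 0 m = 0 := by simp [H]

lemma H_succ (n m : ℕ) : H (n+1) m = H n m + 1/((n:ℝ)+1)^m := by
  rw [H, H, Finset.sum_Icc_succ_top (by omega)]
  push_cast; ring

lemma H_nonneg (n m : ℕ) : 0 ≤ H n m :=
  Finset.sum_nonneg fun i _ => by positivity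

lemma H_eq_range (n m : ℕ) : H n m = ∑ k ∈ Finset.range n, (1:ℝ)/((k:ℝ)+1)^m := by
  induction n with
  | zero => simp [H]
  | succ n ih => rw [H_succ, Finset.sum_range_succ, ih]

lemma range_succ_eq_Icc (f : ℕ → ℝ) (h0 : f 0 = 0) (N : ℕ) :
    ∑ i ∈ Finset.range (N+1), f i = ∑ i ∈ Finset.Icc 1 N, f i := by
  induction N with
  | zero => simp [h0]
  | succ n ih => rw [Finset.sum_range_succ, ih, Finset.sum_Icc_succ_top (by omega)]

/- ### Summability and limits of `H` -/

lemma summable_aux {m : ℕ} (hm : 2 ≤ m) : Summable (fun k : ℕ => (1:ℝ)/((k:ℝ)+1)^m) := by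
  have h1 := (summable_one_div_nat_pow (p := m)).mpr hm
  have h2 := (summable_nat_add_iff 1).mpr h1
  exact h2.congr (by intro k; push_cast; ring)

lemma summable_norm_aux {m : ℕ} (hm : 2 ≤ m) :
    Summable (fun k : ℕ => ‖(1:ℝ)/((k:ℝ)+1)^m‖) := by
  refine (summable_aux hm).congr (fun k => ?_)
  rw [Real.norm_eq_abs, abs_of_nonneg (by positivity)]

lemma hasSum_zeta3 : HasSum (fun k : ℕ => (1:ℝ)/((k:ℝ)+1)^3) zeta3 :=
  (summable_aux (by norm_num)).hasSum

lemma hasSum_shift {m : ℕ} (hm : m ≠ 0) {L : ℝ} (h : HasSum (fun n : ℕ => 1/(n:ℝ)^m) L) :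
    HasSum (fun k : ℕ => (1:ℝ)/((k:ℝ)+1)^m) L := by
  have h3 : HasSum (fun n : ℕ => (1:ℝ)/(((n+1:ℕ)):ℝ)^m) L := by
    refine (hasSum_nat_add_iff (f := fun n : ℕ => (1:ℝ)/(n:ℝ)^m) 1).mpr ?_
    simpa [zero_pow hm] using h
  exact h3.congr (by intro k; push_cast; ring)

lemma tendsto_H {m : ℕ} (hm : m ≠ 0) {L : ℝ}
    (h : HasSum (fun n : ℕ => 1/(n:ℝ)^m) L) :
    Tendsto (fun n => H n m) atTop (𝓝 L) := by
  have h2 := h.tendsto_sum_nat.comp (tendsto_add_atTop_nat 1)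
  have key : ∀ n : ℕ, ∑ i ∈ Finset.range (n+1), (1:ℝ)/(i:ℝ)^m = H n m := by
    intro n
    rw [range_succ_eq_Icc _ (by simp [zero_pow hm]), H]
  simpa only [Function.comp_def, key] using h2

/- ### Bernoulli numbers and `ζ(6)` -/

lemma bernoulli'_five : bernoulli' 5 = 0 := by
  have h1 : Nat.choose 5 2 = 10 := by decide
  have h2 : Nat.choose 5 3 = 10 := by decide
  have h3 : Nat.choose 5 4 = 5 := by decide
  rw [bernoulli'_def]
  norm_num [Finset.sum_range_succ, h1, h2, h3]

lemma bernoulli'_six : bernoulli' 6 = 1/42 := by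
  have h1 : Nat.choose 6 2 = 15 := by decide
  have h2 : Nat.choose 6 3 = 20 := by decide
  have h3 : Nat.choose 6 4 = 15 := by decide
  have h4 : Nat.choose 6 5 = 6 := by decide
  rw [bernoulli'_def]
  norm_num [Finset.sum_range_succ, h1, h2, h3, h4, bernoulli'_five]

lemma hasSum_zeta_six : HasSum (fun n : ℕ => (1:ℝ)/(n:ℝ)^6) (π^6/945) := by
  have h := hasSum_zeta_nat (k := 3) (by norm_num)
  have hb : bernoulli 6 = 1/42 := by
    rw [bernoulli_eq_bernoulli'_of_ne_one (by norm_num), bernoulli'_six]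
  norm_num [hb, Nat.factorial] at h
  convert h using 1
  · funext n; norm_num
  · ring_nf

lemma tendsto_H2 : Tendsto (fun n => H n 2) atTop (𝓝 (π^2/6)) :=
  tendsto_H (by norm_num) hasSum_zeta_two

lemma tendsto_H4 : Tendsto (fun n => H n 4) atTop (𝓝 (π^4/90)) :=
  tendsto_H (by norm_num) hasSum_zeta_four

lemma tendsto_H6 : Tendsto (fun n => H n 6) atTop (𝓝 (π^6/945)) :=
  tendsto_H (by norm_num) hasSum_zeta_six

lemma tendsto_H3 : Tendsto (fun n => H n 3) atTop (𝓝 zeta3) := by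
  have h := hasSum_zeta3.tendsto_sum_nat
  simpa only [← H_eq_range] using h

/- ### The four basic double-zeta partial-sum sequences -/

noncomputable def aseq (t : ℕ) : ℝ := H (t-1) 1 / (t:ℝ)^5
noncomputable def bseq (t : ℕ) : ℝ := H (t-1) 2 / (t:ℝ)^4
noncomputable def cseq (t : ℕ) : ℝ := H (t-1) 3 / (t:ℝ)^3
noncomputable def dseq (t : ℕ) : ℝ := H (t-1) 4 / (t:ℝ)^2

lemma aseq_nonneg (t : ℕ) : 0 ≤ aseq t := div_nonneg (H_nonneg _ _) (by positivity)
lemma bseq_nonneg (t : ℕ) : 0 ≤ bseq t := div_nonneg (H_nonneg _ _) (by positivity)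
lemma cseq_nonneg (t : ℕ) : 0 ≤ cseq t := div_nonneg (H_nonneg _ _) (by positivity)
lemma dseq_nonneg (t : ℕ) : 0 ≤ dseq t := div_nonneg (H_nonneg _ _) (by positivity)

/- ### Finite identities (proved by induction) -/

lemma id1 (n : ℕ) :
    ∑ j ∈ Finset.Icc 1 n, (H j 2) ^ 2 / (j : ℝ) ^ 2 =
      (1 / 3) * (H n 2) ^ 3 + (∑ j ∈ Finset.Icc 1 n, H j 2 / (j : ℝ) ^ 4)
        - (1 / 3) * H n 6 := by
  induction n with
  | zero => simp [H]
  | succ n ih =>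
    have hx : ((n:ℝ)+1) ≠ 0 := by positivity
    have h2 : H (n+1) 2 = H n 2 + 1/((n:ℝ)+1)^2 := H_succ n 2
    have h6 : H (n+1) 6 = H n 6 + 1/((n:ℝ)+1)^6 := H_succ n 6
    rw [Finset.sum_Icc_succ_top (by omega), Finset.sum_Icc_succ_top (by omega), ih, h2, h6]
    push_cast
    field_simp
    ring

lemma id_u (n : ℕ) : (H n 3)^2 = 2 * (∑ t ∈ Finset.Icc 1 n, cseq t) + H n 6 := by
  induction n with
  | zero => simp [H]
  | succ n ih =>
    have hx : ((n:ℝ)+1) ≠ 0 := by positivity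
    rw [Finset.sum_Icc_succ_top (by omega), H_succ, H_succ]
    have hc : cseq (n+1) = H n 3 / ((n:ℝ)+1)^3 := by simp [cseq]
    rw [hc]
    linear_combination (norm := (field_simp; ring)) ih

lemma id_bd (n : ℕ) : H n 2 * H n 4 =
    (∑ t ∈ Finset.Icc 1 n, bseq t) + (∑ t ∈ Finset.Icc 1 n, dseq t) + H n 6 := by
  induction n with
  | zero => simp [H]
  | succ n ih =>
    have hx : ((n:ℝ)+1) ≠ 0 := by positivity
    rw [Finset.sum_Icc_succ_top (by omega), Finset.sum_Icc_succ_top (by omega),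
      H_succ, H_succ, H_succ]
    have hb : bseq (n+1) = H n 2 / ((n:ℝ)+1)^4 := by simp [bseq]
    have hd : dseq (n+1) = H n 4 / ((n:ℝ)+1)^2 := by simp [dseq]
    rw [hb, hd]
    linear_combination (norm := (field_simp; ring)) ih

lemma id_T (n : ℕ) : ∑ j ∈ Finset.Icc 1 n, H j 2 / (j : ℝ) ^ 4 =
    (∑ t ∈ Finset.Icc 1 n, bseq t) + H n 6 := by
  induction n with
  | zero => simp [H]
  | succ n ih =>
    have hx : ((n:ℝ)+1) ≠ 0 := by positivity
    rw [Finset.sum_Icc_succ_top (by omega), Finset.sum_Icc_succ_top (by omega), ih,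
      H_succ, H_succ]
    have hb : bseq (n+1) = H n 2 / ((n:ℝ)+1)^4 := by simp [bseq]
    rw [hb]
    push_cast
    field_simp
    ring

/- ### Partial fraction decompositions and reflection -/

lemma reflect_pow' (n j : ℕ) (r : ℝ) (hr : r = (n:ℝ)+1) :
    ∑ m ∈ Finset.Icc 1 n, (1:ℝ)/(r-(m:ℝ))^j = ∑ m ∈ Finset.Icc 1 n, (1:ℝ)/(m:ℝ)^j := by
  subst hr
  refine Finset.sum_nbij' (i := fun m => n + 1 - m) (j := fun m => n + 1 - m)
    ?_ ?_ ?_ ?_ ?_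
  · intro a ha; simp only [Finset.mem_Icc] at *; omega
  · intro a ha; simp only [Finset.mem_Icc] at *; omega
  · intro a ha; simp only [Finset.mem_Icc] at *; omega
  · intro a ha; simp only [Finset.mem_Icc] at *; omega
  · intro a ha
    simp only [Finset.mem_Icc] at ha
    have h1 : a ≤ n + 1 := by omega
    have : ((n + 1 - a : ℕ) : ℝ) = (n:ℝ) + 1 - (a:ℝ) := by
      push_cast [Nat.cast_sub h1]; ring
    rw [this]

lemma pf33 {a b t : ℝ} (ha : a ≠ 0) (hb : b ≠ 0) (ht : t ≠ 0) (hab : a + b = t) :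
    1/a^3 * (1/b^3) = (1/t^3)*((1:ℝ)/a^3) + (3/t^4)*((1:ℝ)/a^2) + (6/t^5)*((1:ℝ)/a^1)
      + (1/t^3)*((1:ℝ)/b^3) + (3/t^4)*((1:ℝ)/b^2) + (6/t^5)*((1:ℝ)/b^1) := by
  have hab' : t = a + b := hab.symm
  subst hab'
  field_simp
  ring

lemma pf24 {a b t : ℝ} (ha : a ≠ 0) (hb : b ≠ 0) (ht : t ≠ 0) (hab : a + b = t) :
    1/a^2 * (1/b^4) = (1/t^4)*((1:ℝ)/a^2) + (4/t^5)*((1:ℝ)/a^1)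
      + (1/t^2)*((1:ℝ)/b^4) + (2/t^3)*((1:ℝ)/b^3) + (3/t^4)*((1:ℝ)/b^2)
        + (4/t^5)*((1:ℝ)/b^1) := by
  have hab' : t = a + b := hab.symm
  subst hab'
  field_simp
  ring

lemma cast_fact (s k : ℕ) (hk : k ≤ s) : ((s - k : ℕ) : ℝ) = (s:ℝ) - (k:ℝ) := by
  push_cast [Nat.cast_sub hk]; ring

lemma key3 (s : ℕ) :
    ∑ k ∈ Finset.range (s+1), (1/((k:ℝ)+1)^3) * (1/(((s-k : ℕ):ℝ)+1)^3) =
      2 * cseq (s+2) + 6 * bseq (s+2) + 12 * aseq (s+2) := by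
  set T : ℝ := (s:ℝ) + 2 with hT
  have hstep1 : ∑ k ∈ Finset.range (s+1), (1/((k:ℝ)+1)^3) * (1/(((s-k : ℕ):ℝ)+1)^3)
      = ∑ m ∈ Finset.Icc 1 (s+1), (1/(m:ℝ)^3) * (1/(T-(m:ℝ))^3) := by
    refine Finset.sum_nbij' (i := fun k => k + 1) (j := fun m => m - 1)
      ?_ ?_ ?_ ?_ ?_
    · intro a ha; simp only [Finset.mem_Icc, Finset.mem_range] at *; omega
    · intro a ha; simp only [Finset.mem_Icc, Finset.mem_range] at *; omega
    · intro a ha; simp only [Finset.mem_Icc, Finset.mem_range] at *; omega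
    · intro a ha; simp only [Finset.mem_Icc, Finset.mem_range] at *; omega
    · intro k hk
      simp only [Finset.mem_range] at hk
      have hks : k ≤ s := by omega
      rw [cast_fact s k hks, hT]
      push_cast
      ring_nf
  rw [hstep1]
  have hexp : ∀ m ∈ Finset.Icc 1 (s+1), (1/(m:ℝ)^3) * (1/(T-(m:ℝ))^3)
      = (1/T^3)*((1:ℝ)/(m:ℝ)^3) + (3/T^4)*((1:ℝ)/(m:ℝ)^2) + (6/T^5)*((1:ℝ)/(m:ℝ)^1)
        + (1/T^3)*((1:ℝ)/(T-(m:ℝ))^3) + (3/T^4)*((1:ℝ)/(T-(m:ℝ))^2)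
        + (6/T^5)*((1:ℝ)/(T-(m:ℝ))^1) := by
    intro m hm
    simp only [Finset.mem_Icc] at hm
    have h1 : (1:ℝ) ≤ (m:ℝ) := by exact_mod_cast hm.1
    have h2 : (m:ℝ) ≤ (s:ℝ)+1 := by exact_mod_cast hm.2
    have hm0 : (m:ℝ) ≠ 0 := by linarith
    have hTm : T - (m:ℝ) ≠ 0 := by rw [hT]; intro h; nlinarith
    have hT0 : T ≠ 0 := by rw [hT]; positivity
    exact pf33 hm0 hTm hT0 (by ring)
  rw [Finset.sum_congr rfl hexp]
  simp only [Finset.sum_add_distrib, ← Finset.mul_sum]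
  rw [reflect_pow' (s+1) 3 T (by rw [hT]; push_cast; ring),
      reflect_pow' (s+1) 2 T (by rw [hT]; push_cast; ring),
      reflect_pow' (s+1) 1 T (by rw [hT]; push_cast; ring)]
  rw [← H_def (s+1) 3, ← H_def (s+1) 2, ← H_def (s+1) 1]
  have e1 : (s+2) - 1 = s + 1 := by omega
  have e2 : ((s+2 : ℕ):ℝ) = T := by rw [hT]; push_cast; ring
  rw [cseq, bseq, aseq, e1, e2]
  ring

lemma key24 (s : ℕ) :
    ∑ k ∈ Finset.range (s+1), (1/((k:ℝ)+1)^2) * (1/(((s-k : ℕ):ℝ)+1)^4) =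
      dseq (s+2) + 2 * cseq (s+2) + 4 * bseq (s+2) + 8 * aseq (s+2) := by
  set T : ℝ := (s:ℝ) + 2 with hT
  have hstep1 : ∑ k ∈ Finset.range (s+1), (1/((k:ℝ)+1)^2) * (1/(((s-k : ℕ):ℝ)+1)^4)
      = ∑ m ∈ Finset.Icc 1 (s+1), (1/(m:ℝ)^2) * (1/(T-(m:ℝ))^4) := by
    refine Finset.sum_nbij' (i := fun k => k + 1) (j := fun m => m - 1)
      ?_ ?_ ?_ ?_ ?_
    · intro a ha; simp only [Finset.mem_Icc, Finset.mem_range] at *; omega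
    · intro a ha; simp only [Finset.mem_Icc, Finset.mem_range] at *; omega
    · intro a ha; simp only [Finset.mem_Icc, Finset.mem_range] at *; omega
    · intro a ha; simp only [Finset.mem_Icc, Finset.mem_range] at *; omega
    · intro k hk
      simp only [Finset.mem_range] at hk
      have hks : k ≤ s := by omega
      rw [cast_fact s k hks, hT]
      push_cast
      ring_nf
  rw [hstep1]
  have hexp : ∀ m ∈ Finset.Icc 1 (s+1), (1/(m:ℝ)^2) * (1/(T-(m:ℝ))^4)
      = (1/T^4)*((1:ℝ)/(m:ℝ)^2) + (4/T^5)*((1:ℝ)/(m:ℝ)^1)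
        + (1/T^2)*((1:ℝ)/(T-(m:ℝ))^4) + (2/T^3)*((1:ℝ)/(T-(m:ℝ))^3)
        + (3/T^4)*((1:ℝ)/(T-(m:ℝ))^2) + (4/T^5)*((1:ℝ)/(T-(m:ℝ))^1) := by
    intro m hm
    simp only [Finset.mem_Icc] at hm
    have h1 : (1:ℝ) ≤ (m:ℝ) := by exact_mod_cast hm.1
    have h2 : (m:ℝ) ≤ (s:ℝ)+1 := by exact_mod_cast hm.2
    have hm0 : (m:ℝ) ≠ 0 := by linarith
    have hTm : T - (m:ℝ) ≠ 0 := by rw [hT]; intro h; nlinarith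
    have hT0 : T ≠ 0 := by rw [hT]; positivity
    exact pf24 hm0 hTm hT0 (by ring)
  rw [Finset.sum_congr rfl hexp]
  simp only [Finset.sum_add_distrib, ← Finset.mul_sum]
  rw [reflect_pow' (s+1) 4 T (by rw [hT]; push_cast; ring),
      reflect_pow' (s+1) 3 T (by rw [hT]; push_cast; ring),
      reflect_pow' (s+1) 2 T (by rw [hT]; push_cast; ring),
      reflect_pow' (s+1) 1 T (by rw [hT]; push_cast; ring)]
  rw [← H_def (s+1) 4, ← H_def (s+1) 3, ← H_def (s+1) 2, ← H_def (s+1) 1]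
  have e1 : (s+2) - 1 = s + 1 := by omega
  have e2 : ((s+2 : ℕ):ℝ) = T := by rw [hT]; push_cast; ring
  rw [dseq, cseq, bseq, aseq, e1, e2]
  ring

/- ### Shifting Cauchy-product partial sums to `Icc` sums -/

lemma shift2 (g : ℕ → ℝ) (h1 : g 1 = 0) (N : ℕ) :
    ∑ s ∈ Finset.range N, g (s+2) = ∑ t ∈ Finset.Icc 1 (N+1), g t := by
  induction N with
  | zero => simp [h1]
  | succ n ih =>
    rw [Finset.sum_range_succ, ih]
    conv_rhs => rw [Finset.sum_Icc_succ_top (by omega)]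

/- ### The two Cauchy products -/

lemma tendsto_P3 : Tendsto (fun N : ℕ => ∑ t ∈ Finset.Icc 1 N,
      (2 * cseq t + 6 * bseq t + 12 * aseq t)) atTop (𝓝 (zeta3 * zeta3)) := by
  have hn := summable_norm_aux (m := 3) (by norm_num)
  have hc := hasSum_sum_range_mul_of_summable_norm hn hn
  rw [hasSum_zeta3.tsum_eq] at hc
  have hfun : (fun n : ℕ => ∑ k ∈ Finset.range (n+1),
      (1/((k:ℝ)+1)^3) * (1/(((n-k : ℕ):ℝ)+1)^3)) =
      fun s => 2 * cseq (s+2) + 6 * bseq (s+2) + 12 * aseq (s+2) := funext key3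
  rw [hfun] at hc
  have h1 : (2 * cseq 1 + 6 * bseq 1 + 12 * aseq 1) = 0 := by
    simp [aseq, bseq, cseq, H]
  have h2 := hc.tendsto_sum_nat
  have h3 : ∀ N : ℕ, ∑ i ∈ Finset.range N,
      (2 * cseq (i+2) + 6 * bseq (i+2) + 12 * aseq (i+2)) =
      ∑ t ∈ Finset.Icc 1 (N+1), (2 * cseq t + 6 * bseq t + 12 * aseq t) :=
    shift2 (fun t => 2 * cseq t + 6 * bseq t + 12 * aseq t) h1
  simp only [h3] at h2
  exact (tendsto_add_atTop_iff_nat (f := fun N : ℕ => ∑ t ∈ Finset.Icc 1 N,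
    (2 * cseq t + 6 * bseq t + 12 * aseq t)) 1).mp h2

lemma tendsto_P24 : Tendsto (fun N : ℕ => ∑ t ∈ Finset.Icc 1 N,
      (dseq t + 2 * cseq t + 4 * bseq t + 8 * aseq t)) atTop
      (𝓝 ((π^2/6) * (π^4/90))) := by
  have hn2 := summable_norm_aux (m := 2) (by norm_num)
  have hn4 := summable_norm_aux (m := 4) (by norm_num)
  have hc := hasSum_sum_range_mul_of_summable_norm hn2 hn4
  rw [(hasSum_shift (by norm_num) hasSum_zeta_two).tsum_eq,
      (hasSum_shift (by norm_num) hasSum_zeta_four).tsum_eq] at hc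
  have hfun : (fun n : ℕ => ∑ k ∈ Finset.range (n+1),
      (1/((k:ℝ)+1)^2) * (1/(((n-k : ℕ):ℝ)+1)^4)) =
      fun s => dseq (s+2) + 2 * cseq (s+2) + 4 * bseq (s+2) + 8 * aseq (s+2) := funext key24
  rw [hfun] at hc
  have h1 : (dseq 1 + 2 * cseq 1 + 4 * bseq 1 + 8 * aseq 1) = 0 := by
    simp [aseq, bseq, cseq, dseq, H]
  have h2 := hc.tendsto_sum_nat
  have h3 : ∀ N : ℕ, ∑ i ∈ Finset.range N,
      (dseq (i+2) + 2 * cseq (i+2) + 4 * bseq (i+2) + 8 * aseq (i+2)) =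
      ∑ t ∈ Finset.Icc 1 (N+1), (dseq t + 2 * cseq t + 4 * bseq t + 8 * aseq t) :=
    shift2 (fun t => dseq t + 2 * cseq t + 4 * bseq t + 8 * aseq t) h1
  simp only [h3] at h2
  exact (tendsto_add_atTop_iff_nat (f := fun N : ℕ => ∑ t ∈ Finset.Icc 1 N,
    (dseq t + 2 * cseq t + 4 * bseq t + 8 * aseq t)) 1).mp h2

/- ### Convergence of the individual sequences -/

lemma mono_Icc (f : ℕ → ℝ) (hf : ∀ t, 0 ≤ f t) :
    Monotone (fun N => ∑ t ∈ Finset.Icc 1 N, f t) := by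
  apply monotone_nat_of_le_succ
  intro n
  rw [Finset.sum_Icc_succ_top (by omega)]
  exact le_add_of_nonneg_right (hf _)

lemma summable_of_partial (f : ℕ → ℝ) (hf0 : f 0 = 0) (hf : ∀ t, 0 ≤ f t) (c : ℝ)
    (hb : ∀ N, ∑ t ∈ Finset.Icc 1 N, f t ≤ c) : Summable f := by
  apply summable_of_sum_range_le hf
  intro n
  calc ∑ i ∈ Finset.range n, f i ≤ ∑ i ∈ Finset.range (n+1), f i := by
        rw [Finset.sum_range_succ]; exact le_add_of_nonneg_right (hf n)
    _ = ∑ i ∈ Finset.Icc 1 n, f i := range_succ_eq_Icc f hf0 n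
    _ ≤ c := hb n

lemma tendsto_Icc_of_summable (f : ℕ → ℝ) (hf0 : f 0 = 0) (hs : Summable f) :
    Tendsto (fun N => ∑ t ∈ Finset.Icc 1 N, f t) atTop (𝓝 (∑' t, f t)) := by
  have h := hs.hasSum.tendsto_sum_nat.comp (tendsto_add_atTop_nat 1)
  simpa only [Function.comp_def, range_succ_eq_Icc f hf0] using h

lemma aseq0 : aseq 0 = 0 := by simp [aseq]
lemma bseq0 : bseq 0 = 0 := by simp [bseq]
lemma dseq0 : dseq 0 = 0 := by simp [dseq]

lemma bound_P3 : ∀ N, ∑ t ∈ Finset.Icc 1 N,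
    (2 * cseq t + 6 * bseq t + 12 * aseq t) ≤ zeta3 * zeta3 :=
  fun N => (mono_Icc _ (fun t => by
    nlinarith [aseq_nonneg t, bseq_nonneg t, cseq_nonneg t])).ge_of_tendsto tendsto_P3 N

lemma bound_P24 : ∀ N, ∑ t ∈ Finset.Icc 1 N,
    (dseq t + 2 * cseq t + 4 * bseq t + 8 * aseq t) ≤ (π^2/6) * (π^4/90) :=
  fun N => (mono_Icc _ (fun t => by
    nlinarith [aseq_nonneg t, bseq_nonneg t, cseq_nonneg t, dseq_nonneg t])).ge_of_tendsto
      tendsto_P24 N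

lemma summable_aseq : Summable aseq := by
  refine summable_of_partial aseq aseq0 aseq_nonneg (zeta3 * zeta3) (fun N => ?_)
  refine le_trans (Finset.sum_le_sum (fun t _ => ?_)) (bound_P3 N)
  nlinarith [aseq_nonneg t, bseq_nonneg t, cseq_nonneg t]

lemma summable_bseq : Summable bseq := by
  refine summable_of_partial bseq bseq0 bseq_nonneg (zeta3 * zeta3) (fun N => ?_)
  refine le_trans (Finset.sum_le_sum (fun t _ => ?_)) (bound_P3 N)
  nlinarith [aseq_nonneg t, bseq_nonneg t, cseq_nonneg t]

lemma summable_dseq : Summable dseq := by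
  refine summable_of_partial dseq dseq0 dseq_nonneg ((π^2/6) * (π^4/90)) (fun N => ?_)
  refine le_trans (Finset.sum_le_sum (fun t _ => ?_)) (bound_P24 N)
  nlinarith [aseq_nonneg t, bseq_nonneg t, cseq_nonneg t, dseq_nonneg t]

lemma tendsto_C : Tendsto (fun N => ∑ t ∈ Finset.Icc 1 N, cseq t) atTop
    (𝓝 ((zeta3 * zeta3 - π^6/945)/2)) := by
  have h := ((tendsto_H3.mul tendsto_H3).sub tendsto_H6).div_const 2
  exact h.congr fun n => by linear_combination (id_u n) / 2

/- ### The value of `∑ bseq` -/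

lemma tendsto_B : Tendsto (fun N => ∑ t ∈ Finset.Icc 1 N, bseq t) atTop
    (𝓝 (zeta3 * zeta3 - (4/3) * (π^6/945))) := by
  set Sa := ∑' t, aseq t
  set Sb := ∑' t, bseq t
  set Sd := ∑' t, dseq t
  have tA := tendsto_Icc_of_summable aseq aseq0 summable_aseq
  have tB := tendsto_Icc_of_summable bseq bseq0 summable_bseq
  have tD := tendsto_Icc_of_summable dseq dseq0 summable_dseq
  have hsplit3 : ∀ N : ℕ, ∑ t ∈ Finset.Icc 1 N, (2 * cseq t + 6 * bseq t + 12 * aseq t) =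
      2 * (∑ t ∈ Finset.Icc 1 N, cseq t) + 6 * (∑ t ∈ Finset.Icc 1 N, bseq t)
        + 12 * (∑ t ∈ Finset.Icc 1 N, aseq t) := by
    intro N; simp [Finset.sum_add_distrib, Finset.mul_sum]
  have hsplit24 : ∀ N : ℕ, ∑ t ∈ Finset.Icc 1 N,
      (dseq t + 2 * cseq t + 4 * bseq t + 8 * aseq t) =
      (∑ t ∈ Finset.Icc 1 N, dseq t) + 2 * (∑ t ∈ Finset.Icc 1 N, cseq t)
        + 4 * (∑ t ∈ Finset.Icc 1 N, bseq t) + 8 * (∑ t ∈ Finset.Icc 1 N, aseq t) := by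
    intro N; simp [Finset.sum_add_distrib, Finset.mul_sum]
  have E1 : zeta3 * zeta3 = 2 * ((zeta3 * zeta3 - π^6/945)/2) + 6 * Sb + 12 * Sa := by
    refine tendsto_nhds_unique (by simpa only [hsplit3] using tendsto_P3) ?_
    exact ((tendsto_C.const_mul 2).add (tB.const_mul 6)).add (tA.const_mul 12)
  have E2 : (π^2/6) * (π^4/90) = Sd + 2 * ((zeta3 * zeta3 - π^6/945)/2) + 4 * Sb + 8 * Sa := by
    refine tendsto_nhds_unique (by simpa only [hsplit24] using tendsto_P24) ?_
    exact ((tD.add (tendsto_C.const_mul 2)).add (tB.const_mul 4)).add (tA.const_mul 8)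
  have E4 : (π^2/6) * (π^4/90) = Sb + Sd + π^6/945 := by
    refine tendsto_nhds_unique (tendsto_H2.mul tendsto_H4) ?_
    exact (((tB.add tD).add tendsto_H6).congr (fun n => (id_bd n).symm))
  have hSb : Sb = zeta3 * zeta3 - (4/3) * (π^6/945) := by linarith
  rw [← hSb]
  exact tB

theorem sum_H2_sq_div_sq :
    (∀ n : ℕ, 1 ≤ n →
      ∑ j ∈ Finset.Icc 1 n, (H j 2) ^ 2 / (j : ℝ) ^ 2 =
        (1 / 3) * (H n 2) ^ 3 + (∑ j ∈ Finset.Icc 1 n, H j 2 / (j : ℝ) ^ 4)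
          - (1 / 3) * H n 6) ∧
    Tendsto (fun n : ℕ => ∑ j ∈ Finset.Icc 1 n, (H j 2) ^ 2 / (j : ℝ) ^ 2)
      atTop (nhds (zeta3 ^ 2 + 19 * π ^ 6 / 22680)) := by
  constructor
  · exact fun n _ => id1 n
  · have tT : Tendsto (fun n : ℕ => ∑ j ∈ Finset.Icc 1 n, H j 2 / (j:ℝ)^4) atTop
        (𝓝 ((zeta3 * zeta3 - (4/3) * (π^6/945)) + π^6/945)) :=
      (tendsto_B.add tendsto_H6).congr (fun n => (id_T n).symm)
    have final := (((tendsto_H2.pow 3).const_mul (1/3)).add tT).sub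
      (tendsto_H6.const_mul (1/3))
    have final2 := final.congr (fun n => (id1 n).symm)
    convert final2 using 2
    ring
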